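/- Let (S, (A_i)_{i=1}^m, H, P, (R_i)_{i=1}^m) be a tabular episodic Markov game satisfying Condition 2 with target policy π† and gap η > 0. Suppose the agents are attacked by the η-gap attack, they deploy Markov product policies π¹,…,π^K over K episodes with initial states s₁¹,…,s₁^K, and every agent i's best-in-hindsight regret in the post-attack game satisfies Reg_i(K,H) ≤ 𝓡(T) with T = KH. Then the η-gap attack forces the agents to follow the target policy with E[Loss1(K,H)] ≤ m·𝓡(T)/η and E[Cost(K,H)] ≤ m²·𝓡(T)/η. -/

import Mathlib

open Finset

namespace MGAttack

variable {S : Type} [Fintype S] [DecidableEq S]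
variable {m : ℕ} {A : Fin m → Type} [∀ i, Fintype (A i)] [∀ i, DecidableEq (A i)]

/-- `VA P f π n h s`: expected sum of `f` over `n` steps starting from step `h` in
state `s`, when joint actions are drawn from the joint pmf `π` and states evolve
according to `P`.  With `f` a mean-reward function this is the value function. -/
noncomputable def VA (P : ℕ → S → (∀ i, A i) → S → ℝ) (f : ℕ → S → (∀ i, A i) → ℝ)
    (π : ℕ → S → (∀ i, A i) → ℝ) : ℕ → ℕ → S → ℝ
  | 0, _, _ => 0
  | n + 1, h, s => ∑ a, π h s a * (f h s a + ∑ s', P h s a s' * VA P f π n (h + 1) s')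

/-- Value function `V^π_h(s)` for horizon `H` (steps `h, h+1, …, H`). -/
noncomputable def Vf (P : ℕ → S → (∀ i, A i) → S → ℝ) (R : ℕ → S → (∀ i, A i) → ℝ)
    (π : ℕ → S → (∀ i, A i) → ℝ) (H h : ℕ) (s : S) : ℝ :=
  VA P R π (H + 1 - h) h s

/-- Q-function `Q^π_h(s,a)` for horizon `H`. -/
noncomputable def Qf (P : ℕ → S → (∀ i, A i) → S → ℝ) (R : ℕ → S → (∀ i, A i) → ℝ)
    (π : ℕ → S → (∀ i, A i) → ℝ) (H h : ℕ) (s : S) (a : ∀ i, A i) : ℝ :=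
  R h s a + ∑ s', P h s a s' * VA P R π (H - h) (h + 1) s'

/-- Joint pmf of a Markov product policy. -/
noncomputable def jp (π : ∀ i : Fin m, ℕ → S → A i → ℝ) : ℕ → S → (∀ i, A i) → ℝ :=
  fun h s a => ∏ i, π i h s (a i)

/-- Joint action prescribed by a deterministic (product) policy. -/
def tgtJ (τ : ∀ i : Fin m, ℕ → S → A i) (h : ℕ) (s : S) : ∀ i, A i := fun i => τ i h s

/-- A deterministic policy viewed as a (point-mass) stochastic policy. -/
noncomputable def detP (τ : ∀ i : Fin m, ℕ → S → A i) : ∀ i : Fin m, ℕ → S → A i → ℝ :=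
  fun i h s b => if b = τ i h s then 1 else 0

/-- `P` is a transition kernel for the steps `1, …, H`. -/
def IsKernel (H : ℕ) (P : ℕ → S → (∀ i, A i) → S → ℝ) : Prop :=
  ∀ h ∈ Finset.Icc 1 H, ∀ s a, (∀ s', 0 ≤ P h s a s') ∧ ∑ s', P h s a s' = 1

/-- `π` is a Markov product policy for the steps `1, …, H`. -/
def IsPolicy (H : ℕ) (π : ∀ i : Fin m, ℕ → S → A i → ℝ) : Prop :=
  ∀ i : Fin m, ∀ h ∈ Finset.Icc 1 H, ∀ s, (∀ b, 0 ≤ π i h s b) ∧ ∑ b, π i h s b = 1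

/-- `πi` is a Markov policy for the single agent `i`. -/
def IsPolicyI (H : ℕ) {i : Fin m} (πi : ℕ → S → A i → ℝ) : Prop :=
  ∀ h ∈ Finset.Icc 1 H, ∀ s, (∀ b, 0 ≤ πi h s b) ∧ ∑ b, πi h s b = 1

/-- The mean rewards all lie in `[0,1]`. -/
def IsReward (H : ℕ) (R : Fin m → ℕ → S → (∀ i, A i) → ℝ) : Prop :=
  ∀ i, ∀ h ∈ Finset.Icc 1 H, ∀ s a, R i h s a ∈ Set.Icc (0 : ℝ) 1

/-- `d_h(s,a) = m/2 + (1/2) ∑_i 1(a_i = π†_{i,h}(s))` of the `d`-portion attack. -/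
noncomputable def dfun (τ : ∀ i : Fin m, ℕ → S → A i) (h : ℕ) (s : S) (a : ∀ i, A i) : ℝ :=
  (m : ℝ) / 2 + (∑ i, if a i = τ i h s then (1 : ℝ) else 0) / 2

/-- Post-attack mean rewards of the `d`-portion attack (target `τ`, worse policy `τ'`). -/
noncomputable def Rport (R : Fin m → ℕ → S → (∀ i, A i) → ℝ) (τ τ' : ∀ i : Fin m, ℕ → S → A i)
    (i : Fin m) : ℕ → S → (∀ i, A i) → ℝ :=
  fun h s a => (dfun τ h s a / m) * R i h s (tgtJ τ h s)
    + (1 - dfun τ h s a / m) * R i h s (tgtJ τ' h s)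

/-- Post-attack transition probabilities of the `d`-portion attack. -/
noncomputable def Pport (P : ℕ → S → (∀ i, A i) → S → ℝ) (τ τ' : ∀ i : Fin m, ℕ → S → A i) :
    ℕ → S → (∀ i, A i) → S → ℝ :=
  fun h s a s' => (dfun τ h s a / m) * P h s (tgtJ τ h s) s'
    + (1 - dfun τ h s a / m) * P h s (tgtJ τ' h s) s'

/-- `Δ^{†−}_{i,h}(s) = Q^{π†}_{i,h}(s, π†_h(s)) − Q^{π†}_{i,h}(s, π⁻_h(s))` (original game). -/
noncomputable def Δdag (P : ℕ → S → (∀ i, A i) → S → ℝ) (R : Fin m → ℕ → S → (∀ i, A i) → ℝ)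
    (τ τ' : ∀ i : Fin m, ℕ → S → A i) (H : ℕ) (i : Fin m) (h : ℕ) (s : S) : ℝ :=
  Qf P (R i) (jp (detP τ)) H h s (tgtJ τ h s) - Qf P (R i) (jp (detP τ)) H h s (tgtJ τ' h s)

/-- Post-attack mean rewards of the `η`-gap attack; `ΔR i` is the reward spread of agent `i`. -/
noncomputable def Rgap (R : Fin m → ℕ → S → (∀ i, A i) → ℝ) (τ : ∀ i : Fin m, ℕ → S → A i)
    (η : ℝ) (ΔR : Fin m → ℝ) (H : ℕ) (i : Fin m) : ℕ → S → (∀ i, A i) → ℝ :=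
  fun h s a =>
    if a = tgtJ τ h s then R i h s a
    else R i h s (tgtJ τ h s) - (η + ((H - h : ℕ) : ℝ) * ΔR i) * (if a i = τ i h s then 0 else 1)

/-- Post-attack mean rewards of the mixed attack. -/
noncomputable def Rmix (R : Fin m → ℕ → S → (∀ i, A i) → ℝ) (τ : ∀ i : Fin m, ℕ → S → A i)
    (i : Fin m) : ℕ → S → (∀ i, A i) → ℝ :=
  fun h s a => (if a i = τ i h s then (1 : ℝ) else 0) * R i h s (tgtJ τ h s)

/-- Post-attack transition probabilities of the mixed attack. -/
def Pmix (P : ℕ → S → (∀ i, A i) → S → ℝ) (τ : ∀ i : Fin m, ℕ → S → A i) :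
    ℕ → S → (∀ i, A i) → S → ℝ :=
  fun h s a s' => P h s (tgtJ τ h s) s'

/-- Probability of being in state `s'` after `n` steps, starting from `(h, s)` and following
the deterministic policy `τ` under the transitions `P`. -/
noncomputable def reach (P : ℕ → S → (∀ i, A i) → S → ℝ) (τ : ∀ i : Fin m, ℕ → S → A i) :
    ℕ → ℕ → S → S → ℝ
  | 0, _, s, s' => if s' = s then 1 else 0
  | n + 1, h, s, s' => ∑ t, P h s (tgtJ τ h s) t * reach P τ n (h + 1) t s'

/-- Expected sum of a state-dependent function along the Markov chain `Ps`. -/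
noncomputable def SSum (Ps : ℕ → S → S → ℝ) (f : ℕ → S → ℝ) : ℕ → ℕ → S → ℝ
  | 0, _, _ => 0
  | n + 1, h, s => f h s + ∑ s', Ps h s s' * SSum Ps f n (h + 1) s'

end MGAttack

namespace MGAttack

section AuxLemmas

variable {S : Type} [Fintype S] [DecidableEq S]
variable {m : ℕ} {A : Fin m → Type} [∀ i, Fintype (A i)] [∀ i, DecidableEq (A i)]
variable (P : ℕ → S → (∀ i, A i) → S → ℝ) (q : ℕ → S → (∀ i, A i) → ℝ)

lemma VA_succ (f : ℕ → S → (∀ i, A i) → ℝ) (n h : ℕ) (s : S) :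
    VA P f q (n+1) h s
      = ∑ a, q h s a * (f h s a + ∑ s', P h s a s' * VA P f q n (h + 1) s') := rfl

lemma VA_zero : ∀ (n h : ℕ) (s : S), VA P (fun _ _ _ => (0:ℝ)) q n h s = 0 := by
  intro n
  induction n with
  | zero => intro h s; rfl
  | succ n ih => intro h s; simp [VA_succ, ih]

lemma VA_congr (f g : ℕ → S → (∀ i, A i) → ℝ) (hfg : ∀ h s a, f h s a = g h s a)
    (n h : ℕ) (s : S) : VA P f q n h s = VA P g q n h s := by
  have : f = g := by funext h s a; exact hfg h s a
  rw [this]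

lemma VA_add_smul (f g : ℕ → S → (∀ i, A i) → ℝ) (c : ℝ) :
    ∀ (n h : ℕ) (s : S),
      VA P (fun h s a => f h s a + c * g h s a) q n h s
        = VA P f q n h s + c * VA P g q n h s := by
  intro n
  induction n with
  | zero => intro h s; simp [VA]
  | succ n ih =>
    intro h s
    simp only [VA_succ]
    rw [Finset.mul_sum, ← Finset.sum_add_distrib]
    refine Finset.sum_congr rfl fun a _ => ?_
    have h2 : ∑ s', P h s a s' * VA P (fun h s a => f h s a + c * g h s a) q n (h+1) s'
        = ∑ s', P h s a s' * VA P f q n (h+1) s'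
          + c * ∑ s', P h s a s' * VA P g q n (h+1) s' := by
      rw [Finset.mul_sum, ← Finset.sum_add_distrib]
      refine Finset.sum_congr rfl fun s' _ => ?_
      rw [ih]; ring
    rw [h2]; ring

lemma VA_smul (f : ℕ → S → (∀ i, A i) → ℝ) (c : ℝ) (n h : ℕ) (s : S) :
    VA P (fun h s a => c * f h s a) q n h s = c * VA P f q n h s := by
  have h1 := VA_add_smul P q (fun _ _ _ => (0:ℝ)) f c n h s
  rw [VA_zero P q n h s, zero_add] at h1
  exact (VA_congr P q _ _ (fun _ _ _ => (zero_add _).symm) n h s).trans h1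

lemma VA_finsum {κ : Type*} [DecidableEq κ] (t : Finset κ)
    (f : κ → ℕ → S → (∀ i, A i) → ℝ) (n h : ℕ) (s : S) :
    VA P (fun h s a => ∑ j ∈ t, f j h s a) q n h s = ∑ j ∈ t, VA P (f j) q n h s := by
  classical
  induction t using Finset.induction_on with
  | empty => simpa using VA_zero P q n h s
  | @insert j0 t hj ih =>
    have h1 := VA_add_smul P q (f j0) (fun h s a => ∑ j ∈ t, f j h s a) 1 n h s
    calc VA P (fun h s a => ∑ j ∈ insert j0 t, f j h s a) q n h s
        = VA P (fun h s a => f j0 h s a + 1 * ∑ j ∈ t, f j h s a) q n h s :=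
          VA_congr P q _ _ (fun h s a => by rw [Finset.sum_insert hj, one_mul]) n h s
      _ = VA P (f j0) q n h s + 1 * VA P (fun h s a => ∑ j ∈ t, f j h s a) q n h s := h1
      _ = ∑ j ∈ insert j0 t, VA P (f j) q n h s := by
          rw [one_mul, ih, Finset.sum_insert hj]

lemma VA_mono (H : ℕ) (hP : IsKernel H P)
    (hq0 : ∀ h ∈ Finset.Icc 1 H, ∀ s a, 0 ≤ q h s a)
    (f g : ℕ → S → (∀ i, A i) → ℝ)
    (hfg : ∀ h ∈ Finset.Icc 1 H, ∀ s a, q h s a ≠ 0 → f h s a ≤ g h s a) :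
    ∀ n h, 1 ≤ h → h + n ≤ H + 1 → ∀ s, VA P f q n h s ≤ VA P g q n h s := by
  intro n
  induction n with
  | zero => intro h _ _ s; exact le_of_eq rfl
  | succ n ih =>
    intro h h1 hn s
    have hhH : h ∈ Finset.Icc 1 H := by rw [Finset.mem_Icc]; omega
    rw [VA_succ, VA_succ]
    refine Finset.sum_le_sum fun a _ => ?_
    rcases eq_or_ne (q h s a) 0 with h0 | h0
    · simp [h0]
    refine mul_le_mul_of_nonneg_left ?_ (hq0 h hhH s a)
    refine add_le_add (hfg h hhH s a h0) (Finset.sum_le_sum fun s' _ => ?_)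
    exact mul_le_mul_of_nonneg_left (ih (h+1) (by omega) (by omega) s') ((hP h hhH s a).1 s')

lemma VA_le_bound (H : ℕ) (hP : IsKernel H P)
    (hq : ∀ h ∈ Finset.Icc 1 H, ∀ s, (∀ a, 0 ≤ q h s a) ∧ ∑ a, q h s a = 1)
    (f : ℕ → S → (∀ i, A i) → ℝ) (B : ℝ)
    (hf : ∀ h ∈ Finset.Icc 1 H, ∀ s a, q h s a ≠ 0 → f h s a ≤ B) :
    ∀ n h, 1 ≤ h → h + n ≤ H + 1 → ∀ s, VA P f q n h s ≤ (n : ℝ) * B := by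
  intro n
  induction n with
  | zero => intro h _ _ s; show (0:ℝ) ≤ _; simp
  | succ n ih =>
    intro h h1 hn s
    have hhH : h ∈ Finset.Icc 1 H := by rw [Finset.mem_Icc]; omega
    rw [VA_succ]
    have key : ∀ a, q h s a * (f h s a + ∑ s', P h s a s' * VA P f q n (h+1) s')
        ≤ q h s a * (((n:ℝ)+1) * B) := by
      intro a
      rcases eq_or_ne (q h s a) 0 with h0 | h0
      · simp [h0]
      refine mul_le_mul_of_nonneg_left ?_ ((hq h hhH s).1 a)
      have inner : ∑ s', P h s a s' * VA P f q n (h+1) s' ≤ (n : ℝ) * B := by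
        calc ∑ s', P h s a s' * VA P f q n (h+1) s'
            ≤ ∑ s', P h s a s' * ((n:ℝ) * B) :=
              Finset.sum_le_sum fun s' _ => mul_le_mul_of_nonneg_left
                (ih (h+1) (by omega) (by omega) s') ((hP h hhH s a).1 s')
          _ = (n:ℝ) * B := by rw [← Finset.sum_mul, (hP h hhH s a).2, one_mul]
      have := hf h hhH s a h0
      linarith
    calc ∑ a, q h s a * (f h s a + ∑ s', P h s a s' * VA P f q n (h+1) s')
        ≤ ∑ a, q h s a * (((n:ℝ)+1) * B) := Finset.sum_le_sum fun a _ => key a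
      _ = ((n:ℕ)+1 : ℝ) * B := by
          rw [← Finset.sum_mul, (hq h hhH s).2, one_mul]
      _ = ((n+1 : ℕ) : ℝ) * B := by push_cast; ring

lemma VA_ge_bound (H : ℕ) (hP : IsKernel H P)
    (hq : ∀ h ∈ Finset.Icc 1 H, ∀ s, (∀ a, 0 ≤ q h s a) ∧ ∑ a, q h s a = 1)
    (f : ℕ → S → (∀ i, A i) → ℝ) (B : ℝ)
    (hf : ∀ h ∈ Finset.Icc 1 H, ∀ s a, q h s a ≠ 0 → B ≤ f h s a) :
    ∀ n h, 1 ≤ h → h + n ≤ H + 1 → ∀ s, (n : ℝ) * B ≤ VA P f q n h s := by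
  intro n
  induction n with
  | zero => intro h _ _ s; show _ ≤ (0:ℝ); simp
  | succ n ih =>
    intro h h1 hn s
    have hhH : h ∈ Finset.Icc 1 H := by rw [Finset.mem_Icc]; omega
    rw [VA_succ]
    have key : ∀ a, q h s a * (((n:ℝ)+1) * B)
        ≤ q h s a * (f h s a + ∑ s', P h s a s' * VA P f q n (h+1) s') := by
      intro a
      rcases eq_or_ne (q h s a) 0 with h0 | h0
      · simp [h0]
      refine mul_le_mul_of_nonneg_left ?_ ((hq h hhH s).1 a)
      have inner : (n : ℝ) * B ≤ ∑ s', P h s a s' * VA P f q n (h+1) s' := by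
        calc (n:ℝ) * B = ∑ s', P h s a s' * ((n:ℝ) * B) := by
              rw [← Finset.sum_mul, (hP h hhH s a).2, one_mul]
          _ ≤ ∑ s', P h s a s' * VA P f q n (h+1) s' :=
              Finset.sum_le_sum fun s' _ => mul_le_mul_of_nonneg_left
                (ih (h+1) (by omega) (by omega) s') ((hP h hhH s a).1 s')
      have := hf h hhH s a h0
      linarith
    calc ((n+1 : ℕ) : ℝ) * B = ∑ a, q h s a * (((n:ℝ)+1) * B) := by
          push_cast
          rw [← Finset.sum_mul, (hq h hhH s).2, one_mul]
      _ ≤ _ := Finset.sum_le_sum fun a _ => key a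

lemma jp_nonneg (H : ℕ) (π : ∀ j : Fin m, ℕ → S → A j → ℝ) (hπ : IsPolicy H π) :
    ∀ h ∈ Finset.Icc 1 H, ∀ s a, 0 ≤ jp π h s a :=
  fun h hh s a => Finset.prod_nonneg fun j _ => (hπ j h hh s).1 (a j)

lemma jp_prop (H : ℕ) (π : ∀ j : Fin m, ℕ → S → A j → ℝ) (hπ : IsPolicy H π) :
    ∀ h ∈ Finset.Icc 1 H, ∀ s, (∀ a, 0 ≤ jp π h s a) ∧ ∑ a, jp π h s a = 1 := by
  intro h hh s
  refine ⟨fun a => jp_nonneg H π hπ h hh s a, ?_⟩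
  show ∑ a : ∀ j, A j, ∏ j, π j h s (a j) = 1
  rw [← Fintype.prod_sum]
  exact Finset.prod_eq_one fun j _ => (hπ j h hh s).2

end AuxLemmas

end MGAttack
namespace MGAttack

section KeyLemmas

variable {S : Type} [Fintype S] [DecidableEq S]
variable {m : ℕ} {A : Fin m → Type} [∀ i, Fintype (A i)] [∀ i, DecidableEq (A i)]

lemma jp_update_sum (π : ∀ j : Fin m, ℕ → S → A j → ℝ) (i : Fin m)
    (δ : ℕ → S → A i → ℝ) (h : ℕ) (s : S) (c : A i)
    (hδ : ∀ b, δ h s b = if b = c then (1:ℝ) else 0)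
    (hw : ∑ b, π i h s b = 1) (G : (∀ j, A j) → ℝ) :
    ∑ a, jp (Function.update π i δ) h s a * G a
      = ∑ a, jp π h s a * G (Function.update a i c) := by
  classical
  set e := Equiv.piSplitAt i A with he
  have esymm_i : ∀ (b : A i) (f : ∀ j : {j : Fin m // j ≠ i}, A j), e.symm (b, f) i = b := by
    intro b f
    simp [he, Equiv.piSplitAt]
  have esymm_ne : ∀ (b : A i) (f : ∀ j : {j : Fin m // j ≠ i}, A j) (j : Fin m) (hj : j ≠ i),
      e.symm (b, f) j = f ⟨j, hj⟩ := by
    intro b f j hj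
    simp [he, Equiv.piSplitAt, dif_neg hj]
  have upd : ∀ (b : A i) (f : ∀ j : {j : Fin m // j ≠ i}, A j),
      Function.update (e.symm (b, f)) i c = e.symm (c, f) := by
    intro b f
    funext j
    rcases eq_or_ne j i with rfl | hj
    · rw [Function.update_self, esymm_i]
    · rw [Function.update_of_ne hj, esymm_ne b f j hj, esymm_ne c f j hj]
  set W : (∀ j : {j : Fin m // j ≠ i}, A j) → ℝ :=
    fun f => ∏ j ∈ Finset.univ.erase i, π j h s (e.symm (c, f) j) with hW
  have prodw : ∀ (b : A i) (f : ∀ j : {j : Fin m // j ≠ i}, A j),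
      (∏ j, π j h s (e.symm (b, f) j)) = π i h s b * W f := by
    intro b f
    rw [← Finset.mul_prod_erase Finset.univ _ (Finset.mem_univ i)]
    congr 1
    · rw [esymm_i]
    · refine Finset.prod_congr rfl fun j hj => ?_
      have hji : j ≠ i := Finset.ne_of_mem_erase hj
      rw [esymm_ne b f j hji, esymm_ne c f j hji]
  have prodw' : ∀ (b : A i) (f : ∀ j : {j : Fin m // j ≠ i}, A j),
      (∏ j, Function.update π i δ j h s (e.symm (b, f) j))
        = (if b = c then (1:ℝ) else 0) * W f := by
    intro b f
    rw [← Finset.mul_prod_erase Finset.univ _ (Finset.mem_univ i)]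
    congr 1
    · rw [esymm_i, Function.update_self, hδ]
    · refine Finset.prod_congr rfl fun j hj => ?_
      have hji : j ≠ i := Finset.ne_of_mem_erase hj
      rw [Function.update_of_ne hji, esymm_ne b f j hji, esymm_ne c f j hji]
  have lhs_eq : ∑ a, jp (Function.update π i δ) h s a * G a
      = ∑ f : (∀ j : {j : Fin m // j ≠ i}, A j), W f * G (e.symm (c, f)) := by
    rw [← Equiv.sum_comp e.symm (fun a => jp (Function.update π i δ) h s a * G a),
      Fintype.sum_prod_type, Finset.sum_comm]
    refine Finset.sum_congr rfl fun f _ => ?_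
    have : ∀ b : A i, jp (Function.update π i δ) h s (e.symm (b, f)) * G (e.symm (b, f))
        = if b = c then W f * G (e.symm (b, f)) else 0 := by
      intro b
      show (∏ j, Function.update π i δ j h s (e.symm (b, f) j)) * G (e.symm (b, f)) = _
      rw [prodw' b f]
      by_cases hb : b = c <;> simp [hb]
    rw [Finset.sum_congr rfl fun b _ => this b, Finset.sum_ite_eq' Finset.univ c
      (fun b => W f * G (e.symm (b, f))), if_pos (Finset.mem_univ c)]
  have rhs_eq : ∑ a, jp π h s a * G (Function.update a i c)
      = ∑ f : (∀ j : {j : Fin m // j ≠ i}, A j), W f * G (e.symm (c, f)) := by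
    rw [← Equiv.sum_comp e.symm (fun a => jp π h s a * G (Function.update a i c)),
      Fintype.sum_prod_type]
    have : ∀ (b : A i) (f : ∀ j : {j : Fin m // j ≠ i}, A j),
        jp π h s (e.symm (b, f)) * G (Function.update (e.symm (b, f)) i c)
          = π i h s b * (W f * G (e.symm (c, f))) := by
      intro b f
      show (∏ j, π j h s (e.symm (b, f) j)) * G (Function.update (e.symm (b, f)) i c) = _
      rw [prodw b f, upd b f, mul_assoc]
    calc ∑ b, ∑ f : (∀ j : {j : Fin m // j ≠ i}, A j),
          jp π h s (e.symm (b, f)) * G (Function.update (e.symm (b, f)) i c)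
        = ∑ b, ∑ f : (∀ j : {j : Fin m // j ≠ i}, A j),
            π i h s b * (W f * G (e.symm (c, f))) :=
          Finset.sum_congr rfl fun b _ => Finset.sum_congr rfl fun f _ => this b f
      _ = ∑ b, π i h s b * ∑ f : (∀ j : {j : Fin m // j ≠ i}, A j),
            W f * G (e.symm (c, f)) := by
          refine Finset.sum_congr rfl fun b _ => ?_
          rw [Finset.mul_sum]
      _ = _ := by rw [← Finset.sum_mul, hw, one_mul]
  rw [lhs_eq, rhs_eq]

lemma Rgap_tgt (R : Fin m → ℕ → S → (∀ i, A i) → ℝ) (τ : ∀ i : Fin m, ℕ → S → A i)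
    (η : ℝ) (ΔR : Fin m → ℝ) (H : ℕ) (i : Fin m) (h : ℕ) (s : S) (a : ∀ j, A j)
    (hai : a i = τ i h s) :
    Rgap R τ η ΔR H i h s a = R i h s (tgtJ τ h s) := by
  unfold Rgap
  by_cases h' : a = tgtJ τ h s
  · rw [if_pos h', h']
  · rw [if_neg h', if_pos hai, mul_zero, sub_zero]

lemma Rgap_ne (R : Fin m → ℕ → S → (∀ i, A i) → ℝ) (τ : ∀ i : Fin m, ℕ → S → A i)
    (η : ℝ) (ΔR : Fin m → ℝ) (H : ℕ) (i : Fin m) (h : ℕ) (s : S) (a : ∀ j, A j)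
    (hai : a i ≠ τ i h s) :
    Rgap R τ η ΔR H i h s a
      = R i h s (tgtJ τ h s) - (η + ((H - h : ℕ) : ℝ) * ΔR i) := by
  have h' : a ≠ tgtJ τ h s := fun hEq => hai (by rw [hEq]; rfl)
  unfold Rgap
  rw [if_neg h', if_neg hai, mul_one]

end KeyLemmas

end MGAttack
namespace MGAttack

section MainLemma

variable {S : Type} [Fintype S] [DecidableEq S]
variable {m : ℕ} {A : Fin m → Type} [∀ i, Fintype (A i)] [∀ i, DecidableEq (A i)]

lemma gap_regret (H : ℕ) (P : ℕ → S → (∀ i, A i) → S → ℝ) (hP : IsKernel H P)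
    (R : Fin m → ℕ → S → (∀ i, A i) → ℝ) (τ : ∀ i : Fin m, ℕ → S → A i)
    (η : ℝ) (Rmax Rmin : Fin m → ℝ) (i : Fin m)
    (hRt : ∀ h ∈ Finset.Icc 1 H, ∀ s : S,
      Rmin i ≤ R i h s (tgtJ τ h s) ∧ R i h s (tgtJ τ h s) ≤ Rmax i)
    (hΔ : Rmin i ≤ Rmax i)
    (π : ∀ j : Fin m, ℕ → S → A j → ℝ) (hπ : IsPolicy H π) :
    ∀ n h, 1 ≤ h → h + n ≤ H + 1 → ∀ s,
      VA P (Rgap R τ η (fun j => Rmax j - Rmin j) H i) (jp π) n h s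
        + η * VA P (fun h s a => if a i = τ i h s then (0:ℝ) else 1) (jp π) n h s
      ≤ VA P (Rgap R τ η (fun j => Rmax j - Rmin j) H i)
          (jp (Function.update π i (fun h s b => if b = τ i h s then (1:ℝ) else 0))) n h s := by
  set ΔR : Fin m → ℝ := fun j => Rmax j - Rmin j with hΔR
  set δ : ℕ → S → A i → ℝ := fun h s b => if b = τ i h s then (1:ℝ) else 0 with hδ
  set π' := Function.update π i δ with hπ'def
  set q := jp π with hq_def
  set q' := jp π' with hq'_def
  set Rg := Rgap R τ η ΔR H i with hRg
  set fc : ℕ → S → (∀ j, A j) → ℝ :=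
    fun h s a => Rg h s a + η * (if a i = τ i h s then (0:ℝ) else 1) with hfc
  -- π' is a policy
  have hπ'pol : IsPolicy H π' := by
    intro j h hh s
    rcases eq_or_ne j i with rfl | hj
    · rw [hπ'def, Function.update_self]
      constructor
      · intro b; rw [hδ]; dsimp only; split <;> norm_num
      · rw [hδ]; simp
    · rw [hπ'def, Function.update_of_ne hj]
      exact hπ j h hh s
  have hqp := jp_prop H π hπ
  have hq'p := jp_prop H π' hπ'pol
  -- the support of q' forces a i = τ i h s
  have hq'supp : ∀ h s (a : ∀ j, A j), q' h s a ≠ 0 → a i = τ i h s := by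
    intro h s a hne
    by_contra hai
    apply hne
    rw [hq'_def]
    show ∏ j, π' j h s (a j) = 0
    refine Finset.prod_eq_zero (Finset.mem_univ i) ?_
    rw [hπ'def, Function.update_self, hδ]
    exact if_neg hai
  -- A1 : upper bound on the combined value under q
  have hΔ0 : (0:ℝ) ≤ ΔR i := by rw [hΔR]; dsimp only; linarith
  have A1 : ∀ n h, 1 ≤ h → h + n ≤ H + 1 → ∀ s,
      VA P fc q n h s ≤ (n : ℝ) * Rmax i := by
    refine VA_le_bound P q H hP hqp fc (Rmax i) ?_
    intro h hh s a _
    rw [hfc]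
    dsimp only
    rw [hRg]
    by_cases hai : a i = τ i h s
    · rw [Rgap_tgt R τ η ΔR H i h s a hai, if_pos hai, mul_zero, add_zero]
      exact (hRt h hh s).2
    · rw [Rgap_ne R τ η ΔR H i h s a hai, if_neg hai, mul_one]
      have h1 := (hRt h hh s).2
      have h2 : (0:ℝ) ≤ ((H - h : ℕ) : ℝ) * ΔR i :=
        mul_nonneg (Nat.cast_nonneg _) hΔ0
      linarith
  -- A2 : lower bound on the post-attack value under q'
  have A2 : ∀ n h, 1 ≤ h → h + n ≤ H + 1 → ∀ s,
      (n : ℝ) * Rmin i ≤ VA P Rg q' n h s := by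
    refine VA_ge_bound P q' H hP hq'p Rg (Rmin i) ?_
    intro h hh s a hne
    rw [hRg, Rgap_tgt R τ η ΔR H i h s a (hq'supp h s a hne)]
    exact (hRt h hh s).1
  -- main induction
  have M : ∀ n h, 1 ≤ h → h + n ≤ H + 1 → ∀ s,
      VA P fc q n h s ≤ VA P Rg q' n h s := by
    intro n
    induction n with
    | zero => intro h _ _ s; exact le_of_eq rfl
    | succ n ih =>
      intro h h1 hn s
      have hhH : h ∈ Finset.Icc 1 H := by rw [Finset.mem_Icc]; omega
      rw [VA_succ, VA_succ]
      have keyeq := jp_update_sum π i δ h s (τ i h s) (fun b => rfl) ((hπ i h hhH s).2)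
        (fun a => Rg h s a + ∑ s', P h s a s' * VA P Rg q' n (h+1) s')
      rw [← hπ'def, ← hq'_def, ← hq_def] at keyeq
      rw [keyeq]
      refine Finset.sum_le_sum fun a _ => ?_
      rcases eq_or_ne (q h s a) 0 with h0 | h0
      · simp [h0]
      refine mul_le_mul_of_nonneg_left ?_ ((hqp h hhH s).1 a)
      by_cases hai : a i = τ i h s
      · have hupd : Function.update a i (τ i h s) = a := by
          rw [← hai]; exact Function.update_eq_self i a
        rw [hupd]
        have hfca : fc h s a = Rg h s a := by
          rw [hfc]; dsimp only; rw [if_pos hai, mul_zero, add_zero]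
        rw [hfca]
        refine add_le_add (le_refl _) (Finset.sum_le_sum fun s' _ => ?_)
        exact mul_le_mul_of_nonneg_left (ih (h+1) (by omega) (by omega) s')
          ((hP h hhH s a).1 s')
      · -- deviation case
        have hfca : fc h s a
            = R i h s (tgtJ τ h s) - ((H - h : ℕ) : ℝ) * ΔR i := by
          rw [hfc]; dsimp only
          rw [hRg, Rgap_ne R τ η ΔR H i h s a hai, if_neg hai, mul_one]; ring
        have hupd_i : Function.update a i (τ i h s) i = τ i h s :=
          Function.update_self i _ a
        have hRgupd : Rg h s (Function.update a i (τ i h s)) = R i h s (tgtJ τ h s) := by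
          rw [hRg]; exact Rgap_tgt R τ η ΔR H i h s _ hupd_i
        rw [hfca, hRgupd]
        have hSumL : ∑ s', P h s a s' * VA P fc q n (h+1) s' ≤ (n : ℝ) * Rmax i := by
          calc ∑ s', P h s a s' * VA P fc q n (h+1) s'
              ≤ ∑ s', P h s a s' * ((n:ℝ) * Rmax i) :=
                Finset.sum_le_sum fun s' _ => mul_le_mul_of_nonneg_left
                  (A1 n (h+1) (by omega) (by omega) s') ((hP h hhH s a).1 s')
            _ = (n:ℝ) * Rmax i := by rw [← Finset.sum_mul, (hP h hhH s a).2, one_mul]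
        have hSumR : (n : ℝ) * Rmin i
            ≤ ∑ s', P h s (Function.update a i (τ i h s)) s' * VA P Rg q' n (h+1) s' := by
          calc (n:ℝ) * Rmin i
              = ∑ s', P h s (Function.update a i (τ i h s)) s' * ((n:ℝ) * Rmin i) := by
                rw [← Finset.sum_mul, (hP h hhH s _).2, one_mul]
            _ ≤ _ :=
                Finset.sum_le_sum fun s' _ => mul_le_mul_of_nonneg_left
                  (A2 n (h+1) (by omega) (by omega) s') ((hP h hhH s _).1 s')
        have hnle : (n : ℝ) ≤ ((H - h : ℕ) : ℝ) := by
          have : n ≤ H - h := by omega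
          exact_mod_cast this
        have hgap : (n : ℝ) * Rmax i - (n : ℝ) * Rmin i ≤ ((H - h : ℕ) : ℝ) * ΔR i := by
          have := mul_le_mul_of_nonneg_right hnle hΔ0
          rw [hΔR] at *
          dsimp only at *
          nlinarith
        linarith
  intro n h h1 hn s
  have hM := M n h h1 hn s
  have hcomb := VA_add_smul P q Rg (fun h s a => if a i = τ i h s then (0:ℝ) else 1) η n h s
  have : VA P fc q n h s
      = VA P Rg q n h s
        + η * VA P (fun h s a => if a i = τ i h s then (0:ℝ) else 1) q n h s := hcomb
  linarith

end MainLemma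

end MGAttack
namespace MGAttack

/-- Theorem 6 (η-gap attack): under Condition 2, if every agent's best-in-hindsight regret
in the post-attack game is at most `𝓡(T)` with `T = KH`, then the expected attack loss is
at most `m𝓡(T)/η` and the expected attack cost is at most `m²𝓡(T)/η`.  Here
`c i h s a` is the (conditional expected) per-step reward-manipulation cost of the η-gap
attack, which vanishes on the target joint action and is at most `1` otherwise. -/
theorem stmt12 {S : Type} [Fintype S] [DecidableEq S]
    {m : ℕ} {A : Fin m → Type} [∀ i, Fintype (A i)] [∀ i, DecidableEq (A i)]
    (H : ℕ) (hH : 1 ≤ H) (hm : 1 ≤ m)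
    (P : ℕ → S → (∀ i, A i) → S → ℝ) (hP : IsKernel H P)
    (R : Fin m → ℕ → S → (∀ i, A i) → ℝ) (hR : IsReward H R)
    (τ : ∀ i : Fin m, ℕ → S → A i) (η : ℝ) (hη : 0 < η)
    (Rmax Rmin : Fin m → ℝ)
    (hmax : ∀ i : Fin m, IsGreatest
      {x : ℝ | ∃ h ∈ Finset.Icc 1 H, ∃ s : S, ∃ a : ∀ j, A j, x = R i h s a} (Rmax i))
    (hmin : ∀ i : Fin m, IsLeast
      {x : ℝ | ∃ h ∈ Finset.Icc 1 H, ∃ s : S, ∃ a : ∀ j, A j, x = R i h s a} (Rmin i))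
    -- Condition 2
    (hcond2 : ∀ i : Fin m, ∀ h ∈ Finset.Icc 1 H, ∀ s : S,
      ((H - h : ℕ) : ℝ) * (Rmax i - Rmin i) ≤ R i h s (tgtJ τ h s) - η)
    -- the K episodes
    (K : ℕ) (πk : Fin K → ∀ j : Fin m, ℕ → S → A j → ℝ) (hπk : ∀ k, IsPolicy H (πk k))
    (s₁ : Fin K → S) (𝓡 : ℕ → ℝ)
    -- sub-linear best-in-hindsight regret bound in the post-attack game
    (hreg : ∀ i : Fin m, ∀ πi' : ℕ → S → A i → ℝ, IsPolicyI H πi' →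
      ∑ k : Fin K,
          (Vf P (Rgap R τ η (fun j => Rmax j - Rmin j) H i)
              (jp (Function.update (πk k) i πi')) H 1 (s₁ k)
            - Vf P (Rgap R τ η (fun j => Rmax j - Rmin j) H i) (jp (πk k)) H 1 (s₁ k))
        ≤ 𝓡 (K * H))
    -- per-agent per-step expected reward-manipulation cost of the η-gap attack
    (c : Fin m → ℕ → S → (∀ j, A j) → ℝ)
    (hc : ∀ i : Fin m, ∀ h ∈ Finset.Icc 1 H, ∀ s : S, ∀ a : ∀ j, A j,
      0 ≤ c i h s a ∧ c i h s a ≤ (if a = tgtJ τ h s then 0 else 1)) :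
    -- expected attack loss (Loss1) bound
    (∑ k : Fin K, VA P
        (fun h s a => ∑ j : Fin m, (if a j = τ j h s then (0 : ℝ) else 1))
        (jp (πk k)) H 1 (s₁ k)
      ≤ m * 𝓡 (K * H) / η)
    -- expected attack cost bound
    ∧ (∑ k : Fin K, VA P (fun h s a => ∑ i : Fin m, c i h s a) (jp (πk k)) H 1 (s₁ k)
      ≤ (m : ℝ) ^ 2 * 𝓡 (K * H) / η) := by
  classical
  -- basic facts about the reward range
  have hRt : ∀ i : Fin m, ∀ h ∈ Finset.Icc 1 H, ∀ s : S,
      Rmin i ≤ R i h s (tgtJ τ h s) ∧ R i h s (tgtJ τ h s) ≤ Rmax i := by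
    intro i h hh s
    exact ⟨(hmin i).2 ⟨h, hh, s, tgtJ τ h s, rfl⟩, (hmax i).2 ⟨h, hh, s, tgtJ τ h s, rfl⟩⟩
  have hΔi : ∀ i : Fin m, Rmin i ≤ Rmax i := fun i => (hmin i).2 (hmax i).1
  -- per-agent expected-loss bound
  have hCi : ∀ i : Fin m,
      ∑ k : Fin K, VA P (fun h s (a : ∀ j, A j) => if a i = τ i h s then (0:ℝ) else 1)
        (jp (πk k)) H 1 (s₁ k) ≤ 𝓡 (K * H) / η := by
    intro i
    have hδpol : IsPolicyI H (fun h s (b : A i) => if b = τ i h s then (1:ℝ) else 0) := by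
      intro h hh s
      constructor
      · intro b; dsimp only; split <;> norm_num
      · simp
    have hregi := hreg i _ hδpol
    have hkey : ∀ k : Fin K,
        η * VA P (fun h s (a : ∀ j, A j) => if a i = τ i h s then (0:ℝ) else 1)
            (jp (πk k)) H 1 (s₁ k)
          ≤ Vf P (Rgap R τ η (fun j => Rmax j - Rmin j) H i)
              (jp (Function.update (πk k) i (fun h s b => if b = τ i h s then (1:ℝ) else 0)))
              H 1 (s₁ k)
            - Vf P (Rgap R τ η (fun j => Rmax j - Rmin j) H i) (jp (πk k)) H 1 (s₁ k) := by
      intro k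
      have hg := gap_regret H P hP R τ η Rmax Rmin i (hRt i) (hΔi i) (πk k) (hπk k)
        H 1 (le_refl 1) (by omega) (s₁ k)
      have hVf1 : Vf P (Rgap R τ η (fun j => Rmax j - Rmin j) H i) (jp (πk k)) H 1 (s₁ k)
          = VA P (Rgap R τ η (fun j => Rmax j - Rmin j) H i) (jp (πk k)) H 1 (s₁ k) := by
        unfold Vf; rw [Nat.add_sub_cancel]
      have hVf2 : Vf P (Rgap R τ η (fun j => Rmax j - Rmin j) H i)
            (jp (Function.update (πk k) i (fun h s b => if b = τ i h s then (1:ℝ) else 0)))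
            H 1 (s₁ k)
          = VA P (Rgap R τ η (fun j => Rmax j - Rmin j) H i)
            (jp (Function.update (πk k) i (fun h s b => if b = τ i h s then (1:ℝ) else 0)))
            H 1 (s₁ k) := by
        unfold Vf; rw [Nat.add_sub_cancel]
      rw [hVf1, hVf2]
      linarith
    have hsum : η * ∑ k : Fin K,
        VA P (fun h s (a : ∀ j, A j) => if a i = τ i h s then (0:ℝ) else 1)
          (jp (πk k)) H 1 (s₁ k) ≤ 𝓡 (K * H) := by
      rw [Finset.mul_sum]
      calc (∑ k : Fin K, η * VA P (fun h s (a : ∀ j, A j) => if a i = τ i h s then (0:ℝ) else 1)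
            (jp (πk k)) H 1 (s₁ k))
          ≤ ∑ k : Fin K,
            (Vf P (Rgap R τ η (fun j => Rmax j - Rmin j) H i)
              (jp (Function.update (πk k) i (fun h s b => if b = τ i h s then (1:ℝ) else 0)))
              H 1 (s₁ k)
            - Vf P (Rgap R τ η (fun j => Rmax j - Rmin j) H i) (jp (πk k)) H 1 (s₁ k)) :=
            Finset.sum_le_sum fun k _ => hkey k
        _ ≤ 𝓡 (K * H) := hregi
    rw [le_div_iff₀ hη]
    linarith
  -- the loss bound
  have hloss : ∀ k : Fin K,
      VA P (fun h s (a : ∀ j, A j) => ∑ j : Fin m, if a j = τ j h s then (0:ℝ) else 1)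
          (jp (πk k)) H 1 (s₁ k)
        = ∑ j : Fin m, VA P (fun h s (a : ∀ l, A l) => if a j = τ j h s then (0:ℝ) else 1)
            (jp (πk k)) H 1 (s₁ k) :=
    fun k => VA_finsum P (jp (πk k)) Finset.univ
      (fun j h s (a : ∀ l, A l) => if a j = τ j h s then (0:ℝ) else 1) H 1 (s₁ k)
  have hLoss : ∑ k : Fin K, VA P
      (fun h s (a : ∀ j, A j) => ∑ j : Fin m, if a j = τ j h s then (0:ℝ) else 1)
      (jp (πk k)) H 1 (s₁ k) ≤ m * 𝓡 (K * H) / η := by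
    have e2 : (∑ k : Fin K, VA P
        (fun h s (a : ∀ j, A j) => ∑ j : Fin m, if a j = τ j h s then (0:ℝ) else 1)
        (jp (πk k)) H 1 (s₁ k))
        = ∑ j : Fin m, ∑ k : Fin K,
            VA P (fun h s (a : ∀ l, A l) => if a j = τ j h s then (0:ℝ) else 1)
              (jp (πk k)) H 1 (s₁ k) :=
      (Finset.sum_congr rfl fun k _ => hloss k).trans Finset.sum_comm
    rw [e2]
    refine le_trans (Finset.sum_le_sum fun j _ => hCi j) (le_of_eq ?_)
    rw [Finset.sum_const, Finset.card_univ, Fintype.card_fin, nsmul_eq_mul, mul_div_assoc]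
  refine ⟨hLoss, ?_⟩
  -- the cost bound
  have hcostk : ∀ k : Fin K,
      VA P (fun h s (a : ∀ j, A j) => ∑ i : Fin m, c i h s a) (jp (πk k)) H 1 (s₁ k)
        ≤ (m : ℝ) * VA P
            (fun h s (a : ∀ j, A j) => ∑ j : Fin m, if a j = τ j h s then (0:ℝ) else 1)
            (jp (πk k)) H 1 (s₁ k) := by
    intro k
    have hmono := VA_mono P (jp (πk k)) H hP (jp_nonneg H (πk k) (hπk k))
      (fun h s (a : ∀ j, A j) => ∑ i : Fin m, c i h s a)
      (fun h s (a : ∀ j, A j) => (m : ℝ) * ∑ j : Fin m, if a j = τ j h s then (0:ℝ) else 1)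
      ?_ H 1 (le_refl 1) (by omega) (s₁ k)
    · calc (VA P (fun h s (a : ∀ j, A j) => ∑ i : Fin m, c i h s a) (jp (πk k)) H 1 (s₁ k))
          ≤ VA P (fun h s (a : ∀ j, A j) =>
              (m : ℝ) * ∑ j : Fin m, if a j = τ j h s then (0:ℝ) else 1)
              (jp (πk k)) H 1 (s₁ k) := hmono
        _ = (m : ℝ) * VA P
              (fun h s (a : ∀ j, A j) => ∑ j : Fin m, if a j = τ j h s then (0:ℝ) else 1)
              (jp (πk k)) H 1 (s₁ k) :=
            VA_smul P (jp (πk k))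
              (fun h s (a : ∀ j, A j) => ∑ j : Fin m, if a j = τ j h s then (0:ℝ) else 1)
              (m : ℝ) H 1 (s₁ k)
    · intro h hh s a _
      have hind0 : ∀ j : Fin m, (0:ℝ) ≤ if a j = τ j h s then (0:ℝ) else 1 := by
        intro j; split <;> norm_num
      by_cases ha : a = tgtJ τ h s
      · have hz : ∀ i : Fin m, c i h s a = 0 := by
          intro i
          have h2 := (hc i h hh s a).2
          rw [if_pos ha] at h2
          exact le_antisymm h2 (hc i h hh s a).1
        rw [Finset.sum_eq_zero fun i _ => hz i]
        exact mul_nonneg (Nat.cast_nonneg m)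
          (Finset.sum_nonneg fun j _ => hind0 j)
      · obtain ⟨j0, hj0⟩ : ∃ j : Fin m, a j ≠ τ j h s := by
          by_contra hcon
          push_neg at hcon
          exact ha (funext hcon)
        have h1 : (1:ℝ) ≤ ∑ j : Fin m, if a j = τ j h s then (0:ℝ) else 1 := by
          have := Finset.single_le_sum (f := fun j : Fin m =>
            if a j = τ j h s then (0:ℝ) else 1) (fun j _ => hind0 j) (Finset.mem_univ j0)
          rw [if_neg hj0] at this
          exact this
        calc (∑ i : Fin m, c i h s a) ≤ ∑ _i : Fin m, (1:ℝ) := by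
              refine Finset.sum_le_sum fun i _ => ?_
              have h2 := (hc i h hh s a).2
              rw [if_neg ha] at h2
              exact h2
          _ = (m : ℝ) := by
              rw [Finset.sum_const, Finset.card_univ, Fintype.card_fin, nsmul_eq_mul, mul_one]
          _ ≤ (m : ℝ) * ∑ j : Fin m, if a j = τ j h s then (0:ℝ) else 1 :=
              le_mul_of_one_le_right (Nat.cast_nonneg m) h1
  calc (∑ k : Fin K, VA P (fun h s (a : ∀ j, A j) => ∑ i : Fin m, c i h s a)
        (jp (πk k)) H 1 (s₁ k))
      ≤ ∑ k : Fin K, (m : ℝ) * VA P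
          (fun h s (a : ∀ j, A j) => ∑ j : Fin m, if a j = τ j h s then (0:ℝ) else 1)
          (jp (πk k)) H 1 (s₁ k) := Finset.sum_le_sum fun k _ => hcostk k
    _ = (m : ℝ) * ∑ k : Fin K, VA P
          (fun h s (a : ∀ j, A j) => ∑ j : Fin m, if a j = τ j h s then (0:ℝ) else 1)
          (jp (πk k)) H 1 (s₁ k) := by rw [Finset.mul_sum]
    _ ≤ (m : ℝ) * (m * 𝓡 (K * H) / η) :=
        mul_le_mul_of_nonneg_left hLoss (Nat.cast_nonneg m)
    _ = (m : ℝ) ^ 2 * 𝓡 (K * H) / η := by ring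

end MGAttack
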